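/- For any ring R, √Δ(R)·Δ(R) ⊆ Δ(R); i.e., if a ∈ √Δ(R) and b ∈ Δ(R), then ab ∈ Δ(R). -/
import Mathlib

/-- Δ(R) = {x : 1 - x*u is a unit for every unit u}. -/
def Delta (R : Type*) [Ring R] : Set R :=
  {x | ∀ u : R, IsUnit u → IsUnit (1 - x * u)}

/-- √Δ(R) = {x : x^n ∈ Δ(R) for some n ≥ 1}. -/
def sqrtDelta (R : Type*) [Ring R] : Set R :=
  {x | ∃ n : ℕ, 1 ≤ n ∧ x ^ n ∈ Delta R}

/-- Jacobson-style swap: `1 - x*y` a unit implies `1 - y*x` is a unit. -/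
lemma isUnit_one_sub_swap {R : Type*} [Ring R] {x y : R}
    (h : IsUnit (1 - x * y)) : IsUnit (1 - y * x) := by
  obtain ⟨t, ht1, ht2⟩ := isUnit_iff_exists.mp h
  have e1 : x * y * t = t - 1 := by
    calc x * y * t = t - (1 - x * y) * t := by noncomm_ring
      _ = t - 1 := by rw [ht1]
  have e2 : t * (x * y) = t - 1 := by
    calc t * (x * y) = t - t * (1 - x * y) := by noncomm_ring
      _ = t - 1 := by rw [ht2]
  refine isUnit_iff_exists.mpr ⟨1 + y * t * x, ?_, ?_⟩
  · calc (1 - y * x) * (1 + y * t * x)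
        = 1 + y * t * x - y * x - y * (x * y * t) * x := by noncomm_ring
      _ = 1 + y * t * x - y * x - y * (t - 1) * x := by rw [e1]
      _ = 1 := by noncomm_ring
  · calc (1 + y * t * x) * (1 - y * x)
        = 1 + y * t * x - y * x - y * (t * (x * y)) * x := by noncomm_ring
      _ = 1 + y * t * x - y * x - y * (t - 1) * x := by rw [e2]
      _ = 1 := by noncomm_ring

/-- Δ is closed under right multiplication by units. -/
lemma Delta.mul_unit {R : Type*} [Ring R] {e v : R} (he : e ∈ Delta R)
    (hv : IsUnit v) : e * v ∈ Delta R := by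
  intro u hu
  have := he (v * u) (hv.mul hu)
  simpa [mul_assoc] using this

/-- If `1 - a` is a unit and `e ∈ Δ(R)`, then `1 - e * a` is a unit. -/
lemma key_lemma {R : Type*} [Ring R] {a e : R} (ha : IsUnit (1 - a))
    (he : e ∈ Delta R) : IsUnit (1 - e * a) := by
  have h1e : IsUnit (1 - e) := by simpa using he 1 isUnit_one
  obtain ⟨w, hw1, hw2⟩ := isUnit_iff_exists.mp h1e
  have hwu : IsUnit w := isUnit_iff_exists.mpr ⟨1 - e, hw2, hw1⟩
  have hau : IsUnit (a - 1) := by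
    have := ha.neg; rwa [neg_sub] at this
  have hbig : IsUnit (1 - e * w * (a - 1)) := by
    have := he (w * (a - 1)) (hwu.mul hau)
    rwa [← mul_assoc] at this
  have hc : (1 - e) * (e * w) = e := by
    calc (1 - e) * (e * w) = e * ((1 - e) * w) := by noncomm_ring
      _ = e := by rw [hw1, mul_one]
  have hid : (1 - e) * (1 - e * w * (a - 1)) = 1 - e * a := by
    calc (1 - e) * (1 - e * w * (a - 1))
        = (1 - e) - ((1 - e) * (e * w)) * (a - 1) := by noncomm_ring
      _ = (1 - e) - e * (a - 1) := by rw [hc]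
      _ = 1 - e * a := by noncomm_ring
  rw [← hid]
  exact h1e.mul hbig

theorem stmt_4 {R : Type*} [Ring R] (a b : R) (ha : a ∈ sqrtDelta R)
    (hb : b ∈ Delta R) : a * b ∈ Delta R := by
  obtain ⟨n, hn, hna⟩ := ha
  have h1an : IsUnit (1 - a ^ n) := by simpa using hna 1 isUnit_one
  have h1a : IsUnit (1 - a) := by
    have hunit : IsUnit ((∑ i ∈ Finset.range n, a ^ i) * (a - 1)) := by
      rw [geom_sum_mul]
      have := h1an.neg; rwa [neg_sub] at this
    have hcomm : Commute (∑ i ∈ Finset.range n, a ^ i) (a - 1) := by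
      have h : Commute (∑ i ∈ Finset.range n, a ^ i) a :=
        Commute.sum_left _ _ _ (fun i _ => (Commute.refl a).pow_left i)
      exact h.sub_right (Commute.one_right _)
    have := (hcomm.isUnit_mul_iff.mp hunit).2
    have := this.neg; rwa [neg_sub] at this
  intro u hu
  have hbu : b * u ∈ Delta R := Delta.mul_unit hb hu
  have h1 : IsUnit (1 - (b * u) * a) := key_lemma h1a hbu
  have h2 : IsUnit (1 - a * (b * u)) := isUnit_one_sub_swap h1
  rwa [← mul_assoc] at h2
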